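/- Let Y be a topological vector space over ℝ and let L ⊆ Y be a dense subspace that is Čech-complete (in its subspace topology). Then the linear span of L equals Y. -/

import Mathlib

open Set Filter Topology Ordinal TopologicalSpace

/-- A map `φ : K → M` is *almost open* if the image of every nonempty open set
has nonempty interior. -/
def AlmostOpenMap {K M : Type*} [TopologicalSpace K] [TopologicalSpace M] (φ : K → M) : Prop :=
  ∀ V : Set K, IsOpen V → V.Nonempty → (interior (φ '' V)).Nonempty

/-- The Baire class `B_α(X,Y)`: `B_0(X,Y)` is the set of continuous functions, and for `α > 0`,
`B_α(X,Y)` is the set of pointwise limits of sequences from `C(X,Y) ∪ ⋃_{β<α} B_β(X,Y)`. -/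
noncomputable def BaireClass (X Y : Type*) [TopologicalSpace X] [TopologicalSpace Y]
    (α : Ordinal.{0}) : Set (X → Y) :=
  if α = 0 then {f | Continuous f}
  else {f | ∃ g : ℕ → X → Y,
    (∀ n, Continuous (g n) ∨ ∃ β, ∃ _ : β < α, g n ∈ BaireClass X Y β) ∧
    ∀ x, Filter.Tendsto (fun n => g n x) Filter.atTop (nhds (f x))}
termination_by α

/-- `B_α(X,Y)` for `0 ≤ α ≤ ω₁`, where `B_{ω₁}(X,Y) = ⋃_{β<ω₁} B_β(X,Y)`. -/
noncomputable def BaireFun (X Y : Type*) [TopologicalSpace X] [TopologicalSpace Y]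
    (α : Ordinal.{0}) : Set (X → Y) :=
  if α = ω_ 1 then ⋃ β ∈ Set.Iio (ω_ 1 : Ordinal.{0}), BaireClass X Y β
  else BaireClass X Y α

/-- A space is Čech-complete if it is a `G_δ`-set in its Stone–Čech compactification. -/
def IsCechComplete (T : Type*) [TopologicalSpace T] : Prop :=
  ∃ G : ℕ → Set (StoneCech T), (∀ n, IsOpen (G n)) ∧
    Set.range (stoneCechUnit : T → StoneCech T) = ⋂ n, G n

/-- For a completely regular space, the unit into the Stone–Čech compactification is
inducing. -/
theorem isInducing_stoneCechUnit' {Y : Type*} [TopologicalSpace Y] [CompletelyRegularSpace Y] :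
    Topology.IsInducing (stoneCechUnit : Y → StoneCech Y) := by
  rw [isInducing_iff_nhds]
  intro x
  refine le_antisymm ((continuous_stoneCechUnit.tendsto x).le_comap) ?_
  intro U hU
  obtain ⟨V, hVU, hVopen, hxV⟩ := mem_nhds_iff.1 hU
  obtain ⟨g, hgc, hgx, hgK⟩ :=
    CompletelyRegularSpace.completely_regular x Vᶜ hVopen.isClosed_compl (by simpa using hxV)
  rw [Filter.mem_comap]
  refine ⟨(stoneCechExtend hgc) ⁻¹' ({1}ᶜ), ?_, ?_⟩
  · refine IsOpen.mem_nhds (isOpen_compl_singleton.preimage (continuous_stoneCechExtend hgc)) ?_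
    have : stoneCechExtend hgc (stoneCechUnit x) = g x := congrFun (stoneCechExtend_extends hgc) x
    simp only [Set.mem_preimage, Set.mem_compl_iff, Set.mem_singleton_iff, this, hgx]
    intro h
    exact zero_ne_one (α := unitInterval) h
  · intro y hy
    refine hVU (by_contra fun hyV => ?_)
    have h1 : stoneCechExtend hgc (stoneCechUnit y) = g y := congrFun (stoneCechExtend_extends hgc) y
    have : g y = 1 := hgK hyV
    exact hy (by simp [Set.mem_preimage, h1, this])

theorem statement13 (Y : Type*) [AddCommGroup Y] [Module ℝ Y] [TopologicalSpace Y]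
    [IsTopologicalAddGroup Y] [ContinuousSMul ℝ Y] [T35Space Y]
    (L : Set Y) (hdense : Dense L) (hcc : IsCechComplete ↥L) :
    Submodule.span ℝ L = ⊤ := by
  obtain ⟨G, hGopen, hGeq⟩ := hcc
  have hjind : Topology.IsInducing (stoneCechUnit : Y → StoneCech Y) := isInducing_stoneCechUnit'
  have hjinj : Function.Injective (stoneCechUnit : Y → StoneCech Y) :=
    injective_stoneCechUnit_of_t35Space
  have hjc : Continuous (stoneCechUnit : Y → StoneCech Y) := continuous_stoneCechUnit
  set f : ↥L → StoneCech Y := stoneCechUnit ∘ Subtype.val with hfdef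
  have hfc : Continuous f := hjc.comp continuous_subtype_val
  have hfind : Topology.IsInducing f := hjind.comp Topology.IsInducing.subtypeVal
  set phi : StoneCech ↥L → StoneCech Y := stoneCechExtend hfc with hphidef
  have hphic : Continuous phi := continuous_stoneCechExtend hfc
  have hphif : ∀ x : ↥L, phi (stoneCechUnit x) = f x := fun x =>
    congrFun (stoneCechExtend_extends hfc) x
  -- Key: fibers of phi over points of f are just the unit points
  have keyA : ∀ p : StoneCech ↥L, ∀ x : ↥L, phi p = f x → p = stoneCechUnit x := by
    intro p x hpx
    by_contra hne
    obtain ⟨U, V, hU, hV, hpU, hxV, hUV⟩ := t2_separation hne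
    set U' : Set ↥L := stoneCechUnit ⁻¹' U with hU'def
    have hpcl : p ∈ closure (stoneCechUnit '' U') := by
      rw [mem_closure_iff]
      intro W hW hpW
      obtain ⟨a, ha⟩ := denseRange_stoneCechUnit.exists_mem_open (hW.inter hU) ⟨p, hpW, hpU⟩
      exact ⟨stoneCechUnit a, ha.1, a, ha.2, rfl⟩
    have h2 : f x ∈ closure (f '' U') := by
      have h21 : phi p ∈ phi '' closure (stoneCechUnit '' U') := ⟨p, hpcl, rfl⟩
      have h22 : phi '' closure (stoneCechUnit '' U') ⊆ closure (phi '' (stoneCechUnit '' U')) :=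
        image_closure_subset_closure_image hphic
      have h23 : phi '' (stoneCechUnit '' U') = f '' U' := by
        rw [← Set.image_comp]
        exact Set.image_congr fun a _ => hphif a
      rw [← hpx, ← h23]
      exact h22 h21
    have h3 : x ∈ closure U' := by
      rw [hfind.closure_eq_preimage_closure_image]
      exact h2
    rw [mem_closure_iff] at h3
    obtain ⟨z, hzV, hzU⟩ := h3 (stoneCechUnit ⁻¹' V) (hV.preimage continuous_stoneCechUnit) hxV
    exact Set.disjoint_left.1 hUV hzU hzV
  -- phi is surjective
  have hSd : Dense (Set.range f) := by
    have : Set.range f = stoneCechUnit '' L := by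
      rw [hfdef, Set.range_comp, Subtype.range_val]
    rw [this]
    exact denseRange_stoneCechUnit.dense_image hjc hdense
  have hphisurj : Function.Surjective phi := by
    have hclosed : IsClosed (Set.range phi) := (isCompact_range hphic).isClosed
    have hsub : Set.range f ⊆ Set.range phi := by
      rintro _ ⟨x, rfl⟩
      exact ⟨stoneCechUnit x, hphif x⟩
    have : Set.range phi = Set.univ := by
      rw [← hclosed.closure_eq]
      exact (hSd.mono hsub).closure_eq
    exact Set.range_eq_univ.1 this
  -- range f is a countable intersection of open sets in the Stone–Čech compactification of Y
  set Uo : ℕ → Set (StoneCech Y) := fun n => (phi '' (G n)ᶜ)ᶜ with hUodef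
  have hUoOpen : ∀ n, IsOpen (Uo n) :=
    fun n => ((((hGopen n).isClosed_compl).isCompact).image hphic).isClosed.isOpen_compl
  have hSeq : Set.range f = ⋂ n, Uo n := by
    apply Set.Subset.antisymm
    · rintro _ ⟨x, rfl⟩
      refine Set.mem_iInter.2 fun n => ?_
      rintro ⟨p, hp, hpx⟩
      have : p = stoneCechUnit x := keyA p x hpx
      have hpG : p ∈ ⋂ n, G n := by
        rw [← hGeq, this]; exact ⟨x, rfl⟩
      exact hp (Set.mem_iInter.1 hpG n)
    · intro q hq
      obtain ⟨p, rfl⟩ := hphisurj q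
      have hpG : p ∈ ⋂ n, G n := by
        refine Set.mem_iInter.2 fun n => ?_
        by_contra hpn
        exact (Set.mem_iInter.1 hq n) ⟨p, hpn, rfl⟩
      rw [← hGeq] at hpG
      obtain ⟨x, rfl⟩ := hpG
      exact ⟨x, (hphif x).symm⟩
  have hSGδ : IsGδ (Set.range f) := hSeq ▸ IsGδ.iInter_of_isOpen hUoOpen
  -- Now the Baire category argument
  rw [Submodule.eq_top_iff']
  intro y
  set h : Y → Y := fun x => (2 : ℝ) • y + -x with hhdef
  have hhc : Continuous h := continuous_const.add continuous_neg
  have hhinv : ∀ x, h (h x) = x := fun x => by simp [hhdef]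
  set eh : StoneCech Y → StoneCech Y := stoneCechExtend (hjc.comp hhc) with hehdef
  have hehc : Continuous eh := continuous_stoneCechExtend _
  have hehj : ∀ x : Y, eh (stoneCechUnit x) = stoneCechUnit (h x) := fun x =>
    congrFun (stoneCechExtend_extends (hjc.comp hhc)) x
  have hehinv : eh ∘ eh = id := by
    apply stoneCech_hom_ext (hehc.comp hehc) continuous_id
    funext x
    simp only [Function.comp_apply, id_eq, hehj, hhinv]
  have hehsurj : Function.Surjective eh := fun q =>
    ⟨eh q, congrFun hehinv q⟩
  have himg : eh ⁻¹' (Set.range f) = eh '' (Set.range f) := by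
    ext q
    constructor
    · intro hq
      exact ⟨eh q, hq, congrFun hehinv q⟩
    · rintro ⟨r, hr, rfl⟩
      have hrr : eh (eh r) = r := congrFun hehinv r
      rw [Set.mem_preimage, hrr]
      exact hr
  have hTGδ : IsGδ (eh ⁻¹' (Set.range f)) := by
    rw [hSeq, Set.preimage_iInter]
    exact IsGδ.iInter_of_isOpen fun n => (hUoOpen n).preimage hehc
  have hTd : Dense (eh ⁻¹' (Set.range f)) := by
    rw [himg]
    exact hehsurj.denseRange.dense_image hehc hSd
  haveI : Nonempty (StoneCech Y) := ⟨stoneCechUnit 0⟩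
  obtain ⟨q, hqS, hqT⟩ := (Dense.inter_of_Gδ hSGδ hTGδ hSd hTd).nonempty
  obtain ⟨x, hx⟩ := hqS
  have hq2 : eh q ∈ Set.range f := hqT
  rw [← hx] at hq2
  have : eh (f x) = stoneCechUnit (h (x : Y)) := hehj (x : Y)
  rw [this] at hq2
  obtain ⟨x', hx'⟩ := hq2
  have hxx' : h (x : Y) = (x' : Y) := hjinj hx'.symm
  have h2y : (2 : ℝ) • y = (x : Y) + (x' : Y) := by
    rw [← hxx']
    show (2 : ℝ) • y = (x : Y) + ((2 : ℝ) • y + -(x : Y))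
    abel
  have hy : y = (2 : ℝ)⁻¹ • ((x : Y) + (x' : Y)) := by
    rw [← h2y, smul_smul]
    norm_num
  rw [hy]
  exact Submodule.smul_mem _ _ (Submodule.add_mem _
    (Submodule.subset_span x.2) (Submodule.subset_span x'.2))
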